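/- arXiv:1910.14300 — 3 statements merged into one kernel-verified Lean document; each statement's English description precedes it below -/
import Mathlib

section
/- Let G be a finite group and p a prime. Then the smallest positive integer n such that G embeds into the projective general linear group PGL_n over an algebraic closure of the field with p elements is equal to the smallest positive integer n such that G embeds into PGL_n(F) for some field F of characteristic p. In particular, if G embeds into PGL_n(F) for some field F of characteristic p, then G embeds into PGL_n over the algebraic closure of the prime field of characteristic p. -/
open scoped MatrixGroups

abbrev PGL (n : ℕ) (F : Type*) [Field F] : Type _ :=
  GL (Fin n) F ⧸ Subgroup.center (GL (Fin n) F)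

section Center

variable {n : ℕ} {F : Type*} [Field F]

theorem GL_mem_center_iff {A : GL (Fin n) F} :
    A ∈ Subgroup.center (GL (Fin n) F) ↔
      ∃ r : F, Matrix.scalar (Fin n) r = (A : Matrix (Fin n) (Fin n) F) := by
  constructor
  · intro hA
    refine Matrix.mem_range_scalar_of_commute_transvectionStruct fun t => ?_
    have h := Subgroup.mem_center_iff.mp hA
      ⟨t.toMatrix, t.inv.toMatrix, t.mul_inv, t.inv_mul⟩
    exact congrArg Units.val h
  · rintro ⟨r, hr⟩
    refine Subgroup.mem_center_iff.mpr fun B => ?_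
    ext1
    rw [Units.val_mul, Units.val_mul, ← hr]
    exact (Matrix.scalar_commute r (Commute.all r) (B : Matrix (Fin n) (Fin n) F)).symm.eq

end Center

theorem mapMatrix_scalar {α β : Type*} [CommRing α] [CommRing β] {n : ℕ}
    (φ : α →+* β) (r : α) :
    φ.mapMatrix (Matrix.scalar (Fin n) r) = Matrix.scalar (Fin n) (φ r) := by
  ext i j
  simp [Matrix.scalar_apply, Matrix.diagonal_apply]
  aesop

theorem eq_scalar_of_map {α β : Type*} [CommRing α] [CommRing β] {n : ℕ}
    (φ : α →+* β) (hφ : Function.Injective φ) {M : Matrix (Fin n) (Fin n) α} {s : β}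
    (h : Matrix.scalar (Fin n) s = φ.mapMatrix M) (i0 : Fin n) :
    M = Matrix.scalar (Fin n) (M i0 i0) := by
  have hentry : ∀ i j, φ (M i j) = Matrix.scalar (Fin n) s i j := by
    intro i j
    rw [h]; rfl
  ext i j
  rcases eq_or_ne i j with rfl | hij
  · have h1 := hentry i i
    have h2 := hentry i0 i0
    simp only [Matrix.scalar_apply, Matrix.diagonal_apply_eq] at h1 h2 ⊢
    exact hφ (h1.trans h2.symm)
  · have h1 := hentry i j
    simp only [Matrix.scalar_apply, Matrix.diagonal_apply_ne _ hij] at h1 ⊢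
    exact hφ (by rw [h1, map_zero])

theorem exists_hom_to_closure (p : ℕ) [Fact p.Prime] (R : Type*) [CommRing R] [IsDomain R]
    [Algebra (ZMod p) R] [Algebra.FiniteType (ZMod p) R] (a : R) (ha : a ≠ 0) :
    ∃ ψ : R →+* AlgebraicClosure (ZMod p), ψ a ≠ 0 := by
  let L := Localization.Away a
  haveI : IsDomain L :=
    IsLocalization.isDomain_localization (powers_le_nonZeroDivisors_of_noZeroDivisors ha)
  obtain ⟨m, hm⟩ := Ideal.exists_maximal L
  haveI := hm
  haveI : Algebra.FiniteType R L :=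
    IsLocalization.finiteType_of_monoid_fg (Submonoid.powers a) L
  haveI : Algebra.FiniteType (ZMod p) L := Algebra.FiniteType.trans ‹_› ‹_›
  haveI : Algebra.FiniteType (ZMod p) (L ⧸ m) :=
    Algebra.FiniteType.of_surjective
      (Ideal.Quotient.mkₐ (ZMod p) m) (Ideal.Quotient.mkₐ_surjective (ZMod p) m)
  letI : Field (L ⧸ m) := Ideal.Quotient.field m
  haveI : Module.Finite (ZMod p) (L ⧸ m) :=
    finite_of_finite_type_of_isJacobsonRing (ZMod p) (L ⧸ m)
  haveI : Algebra.IsIntegral (ZMod p) (L ⧸ m) := Algebra.IsIntegral.of_finite _ _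
  haveI : Algebra.IsAlgebraic (ZMod p) (L ⧸ m) := Algebra.IsIntegral.isAlgebraic
  haveI : NoZeroSMulDivisors (ZMod p) (L ⧸ m) :=
    inferInstance
  let lift : (L ⧸ m) →ₐ[ZMod p] AlgebraicClosure (ZMod p) := IsAlgClosed.lift
  refine ⟨lift.toRingHom.comp ((algebraMap L (L ⧸ m)).comp (algebraMap R L)), ?_⟩
  have hu : IsUnit (algebraMap R L a) :=
    IsLocalization.map_units L ⟨a, Submonoid.mem_powers a⟩
  exact ((hu.map (algebraMap L (L ⧸ m))).map lift.toRingHom).ne_zero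

universe u v

section Map

variable {n : ℕ} {F K : Type*} [Field F] [Field K]

/-- Functoriality of `GL`. -/
def GLmap (φ : F →+* K) : GL (Fin n) F →* GL (Fin n) K :=
  Units.map (φ.mapMatrix : Matrix (Fin n) (Fin n) F →+* Matrix (Fin n) (Fin n) K).toMonoidHom

theorem GLmap_val (φ : F →+* K) (A : GL (Fin n) F) :
    (GLmap φ A : Matrix (Fin n) (Fin n) K) = (A : Matrix (Fin n) (Fin n) F).map φ := rfl

theorem GLmap_center (φ : F →+* K) {A : GL (Fin n) F}
    (hA : A ∈ Subgroup.center (GL (Fin n) F)) :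
    GLmap φ A ∈ Subgroup.center (GL (Fin n) K) := by
  rw [GL_mem_center_iff] at hA ⊢
  obtain ⟨r, hr⟩ := hA
  refine ⟨φ r, ?_⟩
  rw [← mapMatrix_scalar, hr]
  rfl

theorem GLmap_center_of (φ : F →+* K) {A : GL (Fin n) F}
    (hA : GLmap φ A ∈ Subgroup.center (GL (Fin n) K)) :
    A ∈ Subgroup.center (GL (Fin n) F) := by
  rcases Nat.eq_zero_or_pos n with hn | hn
  · subst hn
    have : A = 1 := Units.ext (Matrix.ext fun i => i.elim0)
    rw [this]; exact Subgroup.one_mem _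
  · have i0 : Fin n := ⟨0, hn⟩
    rw [GL_mem_center_iff] at hA ⊢
    obtain ⟨s, hs⟩ := hA
    refine ⟨(A : Matrix (Fin n) (Fin n) F) i0 i0, ?_⟩
    have hinj := φ.injective
    have hentry : ∀ i j, φ ((A : Matrix (Fin n) (Fin n) F) i j)
        = Matrix.scalar (Fin n) s i j := by
      intro i j
      rw [hs, GLmap_val, Matrix.map_apply]
    ext i j
    rcases eq_or_ne i j with rfl | hij
    · have h1 := hentry i i
      have h2 := hentry i0 i0
      simp only [Matrix.scalar_apply, Matrix.diagonal_apply_eq] at h1 h2 ⊢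
      exact (hinj (h1.trans h2.symm)).symm
    · have h1 := hentry i j
      simp only [Matrix.scalar_apply, Matrix.diagonal_apply_ne _ hij] at h1 ⊢
      exact (hinj (by rw [h1, map_zero])).symm

/-- Functoriality of `PGL`. -/
def PGLmap (φ : F →+* K) : PGL n F →* PGL n K :=
  QuotientGroup.map _ _ (GLmap φ) (fun _ hA => GLmap_center φ hA)

theorem PGLmap_mk (φ : F →+* K) (A : GL (Fin n) F) :
    PGLmap φ (A : PGL n F) = ((GLmap φ A : GL (Fin n) K) : PGL n K) := rfl

theorem PGLmap_injective (φ : F →+* K) : Function.Injective (PGLmap (n := n) φ) := by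
  intro x y h
  induction x using QuotientGroup.induction_on with | _ a =>
  induction y using QuotientGroup.induction_on with | _ b =>
  have h' : ((GLmap φ a : GL (Fin n) K) : PGL n K) = ((GLmap φ b : GL (Fin n) K) : PGL n K) := h
  rw [QuotientGroup.eq] at h' ⊢
  refine GLmap_center_of φ ?_
  rwa [map_mul, map_inv]

end Map


theorem embed_clo (p : ℕ) [Fact p.Prime] {G : Type u} [Group G] [Finite G]
    {n : ℕ} {F : Type v} [Field F] [CharP F p]
    (f : G →* PGL n F) (hf : Function.Injective f) :
    ∃ f' : G →* PGL n (AlgebraicClosure (ZMod p)), Function.Injective f' := by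
  classical
  rcases Nat.eq_zero_or_pos n with hn | hn
  · subst hn
    haveI : Subsingleton (GL (Fin 0) F) :=
      ⟨fun x y => Units.ext (Matrix.ext fun i _ => i.elim0)⟩
    haveI : Subsingleton (PGL 0 F) :=
      ⟨fun x y => by
        induction x using QuotientGroup.induction_on with | _ a =>
        induction y using QuotientGroup.induction_on with | _ b =>
        rw [Subsingleton.elim a b]⟩
    haveI : Subsingleton G := ⟨fun a b => hf (Subsingleton.elim _ _)⟩
    exact ⟨1, fun a b _ => Subsingleton.elim a b⟩
  have i0 : Fin n := ⟨0, hn⟩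
  letI : Algebra (ZMod p) F := ZMod.algebra F p
  -- lifts of `f g` to `GL`
  let u : G → GL (Fin n) F := fun g => (f g).out
  have hu : ∀ g, ((u g : GL (Fin n) F) : PGL n F) = f g := fun g => QuotientGroup.out_eq' (f g)
  -- the subalgebra generated by all entries of the lifts and their inverses
  let e : G × Fin n × Fin n × Bool → F := fun q =>
    if q.2.2.2 then ((u q.1).val : Matrix (Fin n) (Fin n) F) q.2.1 q.2.2.1
    else (((u q.1)⁻¹).val : Matrix (Fin n) (Fin n) F) q.2.1 q.2.2.1
  let Rs : Subalgebra (ZMod p) F := Algebra.adjoin (ZMod p) (Set.range e)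
  haveI : Algebra.FiniteType (ZMod p) Rs := by
    rw [← Subalgebra.fg_iff_finiteType]
    exact ⟨(Set.finite_range e).toFinset, by rw [Set.Finite.coe_toFinset]⟩
  have hmemA : ∀ (g : G) (i j : Fin n), (u g).val i j ∈ Rs := fun g i j =>
    Algebra.subset_adjoin ⟨(g, i, j, true), rfl⟩
  have hmemB : ∀ (g : G) (i j : Fin n), ((u g)⁻¹).val i j ∈ Rs := fun g i j =>
    Algebra.subset_adjoin ⟨(g, i, j, false), rfl⟩
  let ι : Rs →+* F := Rs.val.toRingHom
  have hι : Function.Injective ι := Subtype.coe_injective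
  haveI : Nontrivial Rs := ⟨⟨0, 1, fun h => zero_ne_one (α := F) (congrArg ι h)⟩⟩
  let A : G → Matrix (Fin n) (Fin n) Rs := fun g i j => ⟨(u g).val i j, hmemA g i j⟩
  let B : G → Matrix (Fin n) (Fin n) Rs := fun g i j => ⟨((u g)⁻¹).val i j, hmemB g i j⟩
  have hmapA : ∀ g, ι.mapMatrix (A g) = (u g).val := fun g => rfl
  have hmapB : ∀ g, ι.mapMatrix (B g) = ((u g)⁻¹).val := fun g => rfl
  have hmapinj : Function.Injective
      (ι.mapMatrix : Matrix (Fin n) (Fin n) Rs →+* Matrix (Fin n) (Fin n) F) := by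
    intro M N h
    ext i j
    exact congrFun (congrFun h i) j
  have hAB : ∀ g, A g * B g = 1 := by
    intro g
    apply hmapinj
    rw [map_mul, hmapA, hmapB, map_one, Units.mul_inv]
  have hBA : ∀ g, B g * A g = 1 := by
    intro g
    apply hmapinj
    rw [map_mul, hmapA, hmapB, map_one, Units.inv_mul]
  -- cocycle scalars
  have hcent : ∀ g h : G, ∃ r : Rs, B (g * h) * (A g * A h) = Matrix.scalar (Fin n) r := by
    intro g h
    have hz : (u (g * h))⁻¹ * (u g * u h) ∈ Subgroup.center (GL (Fin n) F) := by
      rw [← QuotientGroup.eq, QuotientGroup.mk_mul, hu, hu, hu, ← map_mul]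
    obtain ⟨rF, hrF⟩ := GL_mem_center_iff.mp hz
    have him : Matrix.scalar (Fin n) rF = ι.mapMatrix (B (g * h) * (A g * A h)) := by
      rw [map_mul, map_mul, hmapA, hmapA, hmapB, hrF, Units.val_mul, Units.val_mul]
    exact ⟨(B (g * h) * (A g * A h)) i0 i0, eq_scalar_of_map ι hι him i0⟩
  -- witnesses of non-scalarity
  let P : G → (Fin n × Fin n) → Prop := fun g q =>
    (q.1 ≠ q.2 ∧ A g q.1 q.2 ≠ 0) ∨ A g q.1 q.1 ≠ A g q.2 q.2
  let w : G → Rs := fun g =>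
    if hw : ∃ q, P g q then
      (if A g hw.choose.1 hw.choose.1 ≠ A g hw.choose.2 hw.choose.2 then
        A g hw.choose.1 hw.choose.1 - A g hw.choose.2 hw.choose.2
      else A g hw.choose.1 hw.choose.2)
    else 1
  have hw_ne : ∀ g, w g ≠ 0 := by
    intro g
    simp only [w]
    split_ifs with hw hd
    · exact sub_ne_zero_of_ne hd
    · rcases hw.choose_spec with ⟨hne, h0⟩ | hd'
      · exact h0
      · exact absurd hd' hd
    · exact one_ne_zero
  have hP : ∀ g : G, g ≠ 1 → ∃ q, P g q := by
    intro g hg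
    by_contra hnq
    push_neg at hnq
    have hAg : A g = Matrix.scalar (Fin n) (A g i0 i0) := by
      ext i j
      rcases eq_or_ne i j with rfl | hij
      · have := hnq (i, i0)
        simp only [P, not_or, not_and, not_not] at this
        simp only [Matrix.scalar_apply, Matrix.diagonal_apply_eq]
        exact congrArg Subtype.val this.2
      · have := hnq (i, j)
        simp only [P, not_or, not_and, not_not] at this
        simp only [Matrix.scalar_apply, Matrix.diagonal_apply_ne _ hij]
        exact congrArg Subtype.val (this.1 hij)
    have hcentg : u g ∈ Subgroup.center (GL (Fin n) F) := by
      refine GL_mem_center_iff.mpr ⟨ι (A g i0 i0), ?_⟩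
      rw [← hmapA g]
      conv_rhs => rw [hAg]
      rw [mapMatrix_scalar]
    have : f g = 1 := by
      rw [← hu g, QuotientGroup.eq_one_iff]
      exact hcentg
    exact hg (hf (by rw [this, map_one]))
  -- the ring morphism to the algebraic closure
  letI := Fintype.ofFinite G
  have ha : (∏ g : G, w g) ≠ 0 := Finset.prod_ne_zero_iff.mpr fun g _ => hw_ne g
  obtain ⟨ψ, hψ⟩ := exists_hom_to_closure p Rs (∏ g : G, w g) ha
  have hψw : ∀ g : G, ψ (w g) ≠ 0 := by
    intro g hzero
    apply hψ
    rw [map_prod]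
    exact Finset.prod_eq_zero (Finset.mem_univ g) hzero
  -- the group morphism to PGL over the algebraic closure
  let V : G → GL (Fin n) (AlgebraicClosure (ZMod p)) := fun g =>
    ⟨ψ.mapMatrix (A g), ψ.mapMatrix (B g),
      by rw [← map_mul, hAB, map_one], by rw [← map_mul, hBA, map_one]⟩
  have hVmul : ∀ g h : G, ((V (g * h) : GL (Fin n) (AlgebraicClosure (ZMod p))) : 
      PGL n (AlgebraicClosure (ZMod p))) = (V g : PGL n (AlgebraicClosure (ZMod p))) * V h := by
    intro g h
    obtain ⟨r, hr⟩ := hcent g h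
    rw [← QuotientGroup.mk_mul, QuotientGroup.eq]
    refine GL_mem_center_iff.mpr ⟨ψ r, ?_⟩
    have hval : (((V (g * h))⁻¹ * (V g * V h)).val : Matrix (Fin n) (Fin n) _)
        = ψ.mapMatrix (B (g * h) * (A g * A h)) := by
      rw [Units.val_mul, Units.val_mul, map_mul, map_mul]
      rfl
    rw [hval, hr, mapMatrix_scalar]
  refine ⟨MonoidHom.mk' (fun g => (V g : PGL n (AlgebraicClosure (ZMod p)))) hVmul, ?_⟩
  rw [injective_iff_map_eq_one]
  intro g hg1
  by_contra hg
  have hex : ∃ q, P g q := hP g hg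
  have hcentV : V g ∈ Subgroup.center (GL (Fin n) (AlgebraicClosure (ZMod p))) := by
    rw [← QuotientGroup.eq_one_iff]
    exact hg1
  obtain ⟨s, hs⟩ := GL_mem_center_iff.mp hcentV
  have hentry : ∀ i j, ψ (A g i j) = Matrix.scalar (Fin n) s i j := by
    intro i j
    rw [hs]; rfl
  have hwg : w g = if A g hex.choose.1 hex.choose.1 ≠ A g hex.choose.2 hex.choose.2 then
      A g hex.choose.1 hex.choose.1 - A g hex.choose.2 hex.choose.2
    else A g hex.choose.1 hex.choose.2 := by
    simp only [w, dif_pos hex]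
  set i := hex.choose.1
  set j := hex.choose.2
  by_cases hd : A g i i ≠ A g j j
  · rw [if_pos hd] at hwg
    have h1 := hentry i i
    have h2 := hentry j j
    simp only [Matrix.scalar_apply, Matrix.diagonal_apply_eq] at h1 h2
    apply hψw g
    rw [hwg, map_sub, h1, h2, sub_self]
  · have hq := hex.choose_spec
    rcases hq with ⟨hne, h0⟩ | hd'
    · rw [if_neg hd] at hwg
      have h1 := hentry i j
      have hne' : i ≠ j := hne
      simp only [Matrix.scalar_apply, Matrix.diagonal_apply_ne _ hne'] at h1
      apply hψw g
      rw [hwg, h1]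
    · exact absurd hd' hd


/-- For a finite group `G` and a prime `p`, the smallest positive `n` such that `G`
embeds into `PGL_n` over an algebraic closure of the field with `p` elements equals
the smallest positive `n` such that `G` embeds into `PGL_n(F)` for some field `F` of
characteristic `p`.  In particular, if `G` embeds into `PGL_n(F)` for some field `F`
of characteristic `p`, then `G` embeds into `PGL_n` over the algebraic closure of the
prime field of characteristic `p`. -/
theorem stmt_1 (p : ℕ) (hp : p.Prime) (G : Type u) [Group G] [Finite G] :
    haveI : Fact p.Prime := ⟨hp⟩
    (sInf { n : ℕ | 0 < n ∧
        ∃ f : G →* PGL n (AlgebraicClosure (ZMod p)), Function.Injective f }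
      = sInf { n : ℕ | 0 < n ∧
          ∃ (F : Type v) (iF : Field F),
            letI := iF
            CharP F p ∧ ∃ f : G →* PGL n F, Function.Injective f })
    ∧ ∀ n : ℕ,
        (∃ (F : Type v) (iF : Field F),
          letI := iF
          CharP F p ∧ ∃ f : G →* PGL n F, Function.Injective f) →
        ∃ f : G →* PGL n (AlgebraicClosure (ZMod p)), Function.Injective f := by
  haveI : Fact p.Prime := ⟨hp⟩
  constructor
  · apply congrArg sInf
    ext n
    simp only [Set.mem_setOf_eq]
    constructor
    · rintro ⟨hn, f, hf⟩
      refine ⟨hn, ULift.{v} (AlgebraicClosure (ZMod p)), inferInstance, ?_, ?_⟩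
      · exact charP_of_injective_ringHom
          (f := ((ULift.ringEquiv (R := AlgebraicClosure (ZMod p))).symm.toRingHom
            : AlgebraicClosure (ZMod p) →+* ULift.{v} (AlgebraicClosure (ZMod p))))
          (ULift.ringEquiv (R := AlgebraicClosure (ZMod p))).symm.injective p
      · exact ⟨(PGLmap ((ULift.ringEquiv
            (R := AlgebraicClosure (ZMod p))).symm.toRingHom)).comp f,
          (PGLmap_injective _).comp hf⟩
    · rintro ⟨hn, F, iF, hF, f, hf⟩
      letI := iF
      haveI := hF
      exact ⟨hn, embed_clo p f hf⟩
  · rintro n ⟨F, iF, hF, f, hf⟩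
    letI := iF
    haveI := hF
    exact embed_clo p f hf
end

section
/- Let G be a finite quasisimple group with central quotient S = G/Z(G), let p be a prime, F a field of characteristic p, and V a finite-dimensional F-vector space with dim V = R_p(S). If ρ : G → GL(V) is a representation whose image is a nontrivial group, then ρ is absolutely irreducible; that is, the base change of V to an algebraic closure of F is a simple module over the group algebra of G. -/
open scoped MatrixGroups TensorProduct

/-- A group is quasisimple if it is perfect and its central quotient is a
non-abelian simple group. -/
def IsQuasisimple (G : Type*) [Group G] : Prop :=
  commutator G = ⊤ ∧ IsSimpleGroup (G ⧸ Subgroup.center G) ∧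
    ∃ a b : G ⧸ Subgroup.center G, a * b ≠ b * a

/-- `projDim p H` is `R_p(H)`: the smallest positive `n` such that `H` embeds into
`PGL_n` over an algebraic closure of the field with `p` elements. -/
noncomputable def projDim (p : ℕ) [Fact p.Prime] (H : Type*) [Group H] : ℕ :=
  sInf { n | 0 < n ∧
    ∃ f : H →* PGL n (AlgebraicClosure (ZMod p)), Function.Injective f }

/-- The base change of a representation of `G` on the `F`-vector space `V` to a
commutative `F`-algebra `A`. -/
noncomputable def Representation.myBaseChange {F G V : Type*} [Field F] [Group G]
    [AddCommGroup V] [Module F V] (A : Type*) [CommRing A] [Algebra F A]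
    (ρ : Representation F G V) : Representation A G (A ⊗[F] V) :=
  (Module.End.baseChangeHom F A V).toRingHom.toMonoidHom.comp ρ


universe u v w

lemma smul_eq_self_of_commutator_top {K : Type u} {G : Type v} [Field K] [Group G]
    (hGperf : commutator G = ⊤)
    {X : Type w} [AddCommGroup X] [Module (MonoidAlgebra K G) X]
    (hcomm : ∀ (g h : G) (x : X), MonoidAlgebra.of K G g • MonoidAlgebra.of K G h • x
      = MonoidAlgebra.of K G h • MonoidAlgebra.of K G g • x)
    (g : G) (x : X) : MonoidAlgebra.of K G g • x = x := by
  have key : ∀ a b : G, ∀ y : X, MonoidAlgebra.of K G (a * b) • y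
      = MonoidAlgebra.of K G a • MonoidAlgebra.of K G b • y := by
    intro a b y
    rw [map_mul, mul_smul]
  set H : Subgroup G :=
    { carrier := {a | ∀ y : X, MonoidAlgebra.of K G a • y = y}
      one_mem' := by intro y; rw [map_one, one_smul]
      mul_mem' := by
        intro a b ha hb y
        rw [key, hb, ha]
      inv_mem' := by
        intro a ha y
        have := key a⁻¹ a y
        rw [inv_mul_cancel, map_one, one_smul, ha] at this
        exact this.symm } with hH
  have hle : commutator G ≤ H := by
    rw [commutator_def, Subgroup.commutator_le]
    intro g₁ _ g₂ _
    intro y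
    show MonoidAlgebra.of K G (g₁ * g₂ * g₁⁻¹ * g₂⁻¹) • y = y
    rw [key, key, key, hcomm g₂ g₁⁻¹, ← key g₁ g₁⁻¹, mul_inv_cancel, map_one, one_smul,
      ← key, mul_inv_cancel, map_one, one_smul]
  have : g ∈ H := hle (hGperf ▸ Subgroup.mem_top g)
  exact this x

/-- A bundled simple nontrivial module over a group algebra. -/
structure SimpleQuot (K : Type u) (G : Type v) [Field K] [Group G] :
    Type (max u v (w + 1)) where
  W : Type w
  [acg : AddCommGroup W]
  [modA : Module (MonoidAlgebra K G) W]
  [modK : Module K W]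
  [tower : IsScalarTower K (MonoidAlgebra K G) W]
  [fd : FiniteDimensional K W]
  simple : IsSimpleModule (MonoidAlgebra K G) W
  nontriv : ∃ (g : G) (x : W), MonoidAlgebra.of K G g • x ≠ x

attribute [instance] SimpleQuot.acg SimpleQuot.modA SimpleQuot.modK SimpleQuot.tower SimpleQuot.fd

lemma findSimple (K : Type u) (G : Type v) [Field K] [Group G]
    (hGperf : commutator G = ⊤) :
    ∀ (n : ℕ) (X : Type w) [AddCommGroup X] [Module (MonoidAlgebra K G) X] [Module K X]
      [IsScalarTower K (MonoidAlgebra K G) X] [FiniteDimensional K X],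
      Module.finrank K X ≤ n →
      (∃ (g : G) (x : X), MonoidAlgebra.of K G g • x ≠ x) →
      ∃ S : SimpleQuot.{u, v, w} K G, Module.finrank K S.W ≤ Module.finrank K X ∧
        (¬ IsSimpleModule (MonoidAlgebra K G) X →
          Module.finrank K S.W < Module.finrank K X) := by
  intro n
  induction n with
  | zero =>
    intro X _ _ _ _ _ hle hnt
    exfalso
    obtain ⟨g, x, hx⟩ := hnt
    have : Subsingleton X := by
      have h0 : Module.finrank K X = 0 := Nat.le_zero.mp hle
      exact (Module.finrank_zero_iff (R := K)).mp h0
    exact hx (Subsingleton.elim _ _)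
  | succ n IH =>
    intro X _ _ _ _ _ hle hnt
    classical
    set A := MonoidAlgebra K G with hA
    set M' : Submodule A X :=
      Submodule.span A {y | ∃ (g : G) (x : X), y = MonoidAlgebra.of K G g • x - x} with hM'
    have hmem : ∀ (g : G) (x : X), MonoidAlgebra.of K G g • x - x ∈ M' := fun g x =>
      Submodule.subset_span ⟨g, x, rfl⟩
    by_cases htriv : ∀ (g : G), ∀ y ∈ M', MonoidAlgebra.of K G g • y = y
    · exfalso
      have hcomm : ∀ (g h : G) (x : X), MonoidAlgebra.of K G g • MonoidAlgebra.of K G h • x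
          = MonoidAlgebra.of K G h • MonoidAlgebra.of K G g • x := by
        intro g h x
        have e : ∀ a b : G, ∀ x : X, MonoidAlgebra.of K G a • MonoidAlgebra.of K G b • x
            = MonoidAlgebra.of K G b • x + MonoidAlgebra.of K G a • x - x := by
          intro a b x
          have := htriv a _ (hmem b x)
          rw [smul_sub] at this
          have h2 : MonoidAlgebra.of K G a • MonoidAlgebra.of K G b • x
              = MonoidAlgebra.of K G b • x - x + MonoidAlgebra.of K G a • x := by
            rw [← this]; abel
          rw [h2]; abel
        rw [e g h x, e h g x]; abel
      obtain ⟨g, x, hx⟩ := hnt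
      exact hx (smul_eq_self_of_commutator_top (K := K) (G := G) (X := X) hGperf hcomm g x)
    · push_neg at htriv
      obtain ⟨g₀, y₀, hy₀mem, hy₀⟩ := htriv
      by_cases htop : M' = ⊤
      · -- take a maximal submodule and pass to the quotient
        have hnontrivX : Nontrivial X := by
          obtain ⟨g, x, hx⟩ := hnt
          exact nontrivial_of_ne _ _ hx
        have hfinA : Module.Finite A X :=
          Module.Finite.of_restrictScalars_finite K A X
        have hcoatomic : IsCoatomic (Submodule A X) :=
          CompleteLattice.coatomic_of_top_compact
            ((Submodule.fg_iff_compact _).mp (Module.finite_def.mp hfinA))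
        obtain hbt | ⟨P, hP, -⟩ := hcoatomic.eq_top_or_exists_le_coatom (⊥ : Submodule A X)
        · exact absurd hbt bot_ne_top
        · set W := X ⧸ P with hW
          have hsimpleW : IsSimpleModule A W := isSimpleModule_iff_isCoatom.mpr hP
          have eqv : (X ⧸ P.restrictScalars K) ≃ₗ[K] W :=
            Submodule.Quotient.restrictScalarsEquiv K P
          have hfdW : FiniteDimensional K W := Module.Finite.equiv eqv
          have hrankW : Module.finrank K W + Module.finrank K (P.restrictScalars K)
              = Module.finrank K X := by
            rw [← eqv.finrank_eq]
            exact Submodule.finrank_quotient_add_finrank (P.restrictScalars K)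
          have hntW : ∃ (g : G) (x : W), MonoidAlgebra.of K G g • x ≠ x := by
            by_contra hc
            push_neg at hc
            have hspan : M' ≤ P := by
              rw [hM', Submodule.span_le]
              rintro _ ⟨g, x, rfl⟩
              have := hc g (Submodule.Quotient.mk x)
              rw [← Submodule.Quotient.mk_smul, Submodule.Quotient.eq] at this
              exact this
            rw [htop] at hspan
            exact hP.1 (top_le_iff.mp hspan)
          refine ⟨⟨W, hsimpleW, hntW⟩, ?_, ?_⟩
          · show Module.finrank K W ≤ Module.finrank K X
            omega
          · intro hnsX
            show Module.finrank K W < Module.finrank K X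
            have hPbot : P ≠ ⊥ := by
              intro hPb
              exact hnsX (IsSimpleModule.congr (Submodule.quotEquivOfEqBot P hPb).symm)
            have hnt' : Nontrivial (P.restrictScalars K) :=
              Submodule.nontrivial_iff_ne_bot.mpr
                (fun h => hPbot ((Submodule.restrictScalars_eq_bot_iff K A X).mp h))
            have : 0 < Module.finrank K (P.restrictScalars K) := Module.finrank_pos
            omega
      · -- recurse into the proper submodule M'
        have hfdM' : FiniteDimensional K M' :=
          Module.Finite.equiv ((Submodule.restrictScalarsEquiv K A X M').restrictScalars K)
        have hrlt : Module.finrank K M' < Module.finrank K X := by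
          have : Module.finrank K (M'.restrictScalars K) < Module.finrank K X :=
            Submodule.finrank_lt (id
              (fun h => htop (Submodule.restrictScalars_injective K A X
                (h.trans (Submodule.restrictScalars_top K A X).symm))))
          rwa [((Submodule.restrictScalarsEquiv K A X M').restrictScalars K).finrank_eq] at this
        have hntM' : ∃ (g : G) (x : M'), MonoidAlgebra.of K G g • x ≠ x := by
          refine ⟨g₀, ⟨y₀, hy₀mem⟩, fun hc => hy₀ ?_⟩
          exact congrArg Subtype.val hc
        obtain ⟨S, hS1, -⟩ := IH M' (by omega) hntM'
        exact ⟨S, le_of_lt (lt_of_le_of_lt hS1 hrlt), fun _ => lt_of_le_of_lt hS1 hrlt⟩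

set_option maxHeartbeats 1600000 in
set_option synthInstance.maxHeartbeats 400000 in
lemma embed_PGL (p : ℕ) [Fact p.Prime] {K : Type u} {G : Type v} [Field K] [IsAlgClosed K]
    [CharP K p] [Group G] [Finite G] (hG : IsQuasisimple G)
    (W : Type w) [AddCommGroup W] [Module (MonoidAlgebra K G) W] [Module K W]
    [IsScalarTower K (MonoidAlgebra K G) W] [FiniteDimensional K W]
    (hsimple : IsSimpleModule (MonoidAlgebra K G) W)
    (hnt : ∃ (g : G) (x : W), MonoidAlgebra.of K G g • x ≠ x) :
    0 < Module.finrank K W ∧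
    ∃ f : (G ⧸ Subgroup.center G) →* PGL (Module.finrank K W) (AlgebraicClosure (ZMod p)),
      Function.Injective f := by
  classical
  cases nonempty_fintype G
  obtain ⟨hGperf, hGsimp, hGnab⟩ := hG
  have hntW : Nontrivial W := by
    obtain ⟨g, x, hx⟩ := hnt
    exact nontrivial_of_ne _ _ hx
  -- commutation of `K`-scalars with the `MonoidAlgebra` action
  have hKcomm : ∀ (a : MonoidAlgebra K G) (k : K) (x : W), a • (k • x) = k • (a • x) := by
    intro a k x
    rw [← algebraMap_smul (MonoidAlgebra K G) k x, ← mul_smul, ← Algebra.commutes, mul_smul,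
      algebraMap_smul]
  -- the action of a fixed group element as a `K`-linear endomorphism
  set τop : G → (W →ₗ[K] W) := fun g =>
    { toFun := fun x => MonoidAlgebra.of K G g • x
      map_add' := fun x y => smul_add _ x y
      map_smul' := fun k x => hKcomm _ k x } with hτop
  have τop_apply : ∀ g x, τop g x = MonoidAlgebra.of K G g • x := fun _ _ => rfl
  have τop_mul : ∀ g h : G, τop (g * h) = τop g * τop h := by
    intro g h
    ext x
    simp only [τop_apply, Module.End.mul_apply, map_mul, mul_smul]
  -- Schur's lemma
  have hSchur : ∀ φ : W →ₗ[K] W,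
      (∀ (g : G) (x : W), φ (MonoidAlgebra.of K G g • x) = MonoidAlgebra.of K G g • φ x) →
      ∃ c : K, ∀ x : W, φ x = c • x := by
    intro φ hφ
    have hAlin : ∀ (a : MonoidAlgebra K G) (x : W), φ (a • x) = a • φ x := by
      intro a x
      induction a using MonoidAlgebra.induction_linear with
      | zero => rw [zero_smul, zero_smul, map_zero]
      | add f g hf hg => rw [add_smul, add_smul, map_add, hf, hg]
      | single g k =>
        have hs : MonoidAlgebra.single g k = k • MonoidAlgebra.of K G g := by
          rw [MonoidAlgebra.of_apply, MonoidAlgebra.smul_single', mul_one]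
        rw [hs, smul_assoc, smul_assoc, map_smul, hφ]
    obtain ⟨c, hc⟩ := Module.End.exists_eigenvalue φ
    obtain ⟨v, hv⟩ := hc.exists_hasEigenvector
    have hv1 : φ v = c • v := Module.End.mem_eigenspace_iff.mp hv.1
    set N : Submodule (MonoidAlgebra K G) W :=
      { carrier := {x | φ x = c • x}
        add_mem' := by
          intro x y hx hy
          show φ (x + y) = c • (x + y)
          rw [map_add, hx, hy, smul_add]
        zero_mem' := by show φ 0 = c • (0 : W); simp
        smul_mem' := by
          intro a x hx
          show φ (a • x) = c • (a • x)
          rw [hAlin, hx, hKcomm] } with hN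
    have hNne : N ≠ ⊥ := by
      intro hNb
      have : v ∈ N := hv1
      rw [hNb] at this
      exact hv.2 this
    have hNtop : N = ⊤ := (hsimple.1.eq_bot_or_eq_top N).resolve_left hNne
    refine ⟨c, fun x => ?_⟩
    have : x ∈ N := hNtop ▸ Submodule.mem_top
    exact this
  -- central elements act by scalars
  have hcentral : ∀ z ∈ Subgroup.center G, ∃ c : K, ∀ x : W,
      MonoidAlgebra.of K G z • x = c • x := by
    intro z hz
    refine hSchur (τop z) fun g x => ?_
    simp only [τop_apply, ← mul_smul, ← map_mul]
    rw [(Subgroup.mem_center_iff.mp hz g)]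
  -- elements acting by scalars are central
  have hscalar_central : ∀ g : G, (∃ c : K, ∀ x : W, MonoidAlgebra.of K G g • x = c • x) →
      g ∈ Subgroup.center G := by
    intro g₁ hg₁
    set Nsc : Subgroup G :=
      { carrier := {g | ∃ c : K, ∀ x : W, MonoidAlgebra.of K G g • x = c • x}
        one_mem' := ⟨1, fun x => by rw [map_one, one_smul, one_smul]⟩
        mul_mem' := by
          rintro a b ⟨c₁, hc₁⟩ ⟨c₂, hc₂⟩
          refine ⟨c₁ * c₂, fun x => ?_⟩
          rw [map_mul, mul_smul, hc₂, hKcomm, hc₁, smul_smul, mul_comm]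
        inv_mem' := by
          rintro a ⟨c, hc⟩
          have hcne : c ≠ 0 := by
            intro h0
            obtain ⟨x, y, hxy⟩ := hntW
            have hall : ∀ w : W, w = 0 := by
              intro w
              have h1 : MonoidAlgebra.of K G a • (MonoidAlgebra.of K G a⁻¹ • w) = w := by
                rw [← mul_smul, ← map_mul, mul_inv_cancel, map_one, one_smul]
              rw [hc, h0, zero_smul] at h1
              exact h1.symm
            exact hxy ((hall x).trans (hall y).symm)
          refine ⟨c⁻¹, fun x => ?_⟩
          have h1 : MonoidAlgebra.of K G a • (MonoidAlgebra.of K G a⁻¹ • x) = x := by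
            rw [← mul_smul, ← map_mul, mul_inv_cancel, map_one, one_smul]
          rw [hc] at h1
          conv_rhs => rw [← h1]
          rw [smul_smul, inv_mul_cancel₀ hcne, one_smul] } with hNsc
    have hNscNormal : Nsc.Normal := by
      constructor
      rintro n ⟨c, hc⟩ h
      refine ⟨c, fun x => ?_⟩
      have : (h * n * h⁻¹ : G) = h * n * h⁻¹ := rfl
      rw [map_mul, map_mul, mul_smul, mul_smul, hc, hKcomm, ← mul_smul, ← map_mul,
        mul_inv_cancel, map_one, one_smul]
    have hcen_le : Subgroup.center G ≤ Nsc := fun z hz => hcentral z hz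
    set π : G →* G ⧸ Subgroup.center G := QuotientGroup.mk' (Subgroup.center G) with hπ
    have hmapNormal : (Nsc.map π).Normal :=
      Subgroup.Normal.map hNscNormal π (QuotientGroup.mk'_surjective _)
    rcases hGsimp.eq_bot_or_eq_top_of_normal (Nsc.map π) hmapNormal with hb | ht
    · have : Nsc ≤ π.ker := (Subgroup.map_eq_bot_iff Nsc).mp hb
      have : g₁ ∈ π.ker := this hg₁
      rwa [QuotientGroup.ker_mk'] at this
    · exfalso
      -- every element decomposes as (scalar) * (central); all operators commute
      have hdecomp : ∀ a : G, ∃ (n z : G), n ∈ Nsc ∧ z ∈ Subgroup.center G ∧ a = n * z := by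
        intro a
        have : π a ∈ Nsc.map π := ht ▸ Subgroup.mem_top _
        obtain ⟨n, hn, hna⟩ := this
        refine ⟨n, n⁻¹ * a, hn, ?_, by group⟩
        have : π n = π a := hna
        have h2 : π (n⁻¹ * a) = 1 := by rw [map_mul, map_inv, this, inv_mul_cancel]
        have h3 : n⁻¹ * a ∈ π.ker := h2
        rwa [QuotientGroup.ker_mk'] at h3
      have hcomm : ∀ (a b : G) (x : W), MonoidAlgebra.of K G a • MonoidAlgebra.of K G b • x
          = MonoidAlgebra.of K G b • MonoidAlgebra.of K G a • x := by
        have hop : ∀ a : G, ∃ (c : K) (z : G), z ∈ Subgroup.center G ∧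
            ∀ x : W, MonoidAlgebra.of K G a • x = c • (MonoidAlgebra.of K G z • x) := by
          intro a
          obtain ⟨n, z, ⟨c, hc⟩, hz, rfl⟩ := hdecomp a
          exact ⟨c, z, hz, fun x => by rw [map_mul, mul_smul, hc]⟩
        intro a b x
        obtain ⟨c₁, z₁, hz₁, h₁⟩ := hop a
        obtain ⟨c₂, z₂, hz₂, h₂⟩ := hop b
        have hzz : ∀ x : W, MonoidAlgebra.of K G z₁ • MonoidAlgebra.of K G z₂ • x
            = MonoidAlgebra.of K G z₂ • MonoidAlgebra.of K G z₁ • x := by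
          intro x
          rw [← mul_smul, ← map_mul, (Subgroup.mem_center_iff.mp hz₂ z₁), map_mul, mul_smul]
        rw [h₁, h₂, hKcomm, h₁, hzz, ← hKcomm _ c₁, ← h₂, hKcomm, hKcomm]
      obtain ⟨g, x, hx⟩ := hnt
      exact hx (smul_eq_self_of_commutator_top (K := K) (G := G) (X := W) hGperf hcomm g x)
  -- if every element acts by a scalar we get a contradiction
  have hnotallscalar : ¬ (∀ g : G, ∃ c : K, ∀ x : W, MonoidAlgebra.of K G g • x = c • x) := by
    intro hall
    have hcomm : ∀ (a b : G) (x : W), MonoidAlgebra.of K G a • MonoidAlgebra.of K G b • x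
        = MonoidAlgebra.of K G b • MonoidAlgebra.of K G a • x := by
      intro a b x
      obtain ⟨c₁, h₁⟩ := hall a
      obtain ⟨c₂, h₂⟩ := hall b
      rw [h₁, h₂, h₁, h₂, smul_smul, smul_smul, mul_comm]
    obtain ⟨g, x, hx⟩ := hnt
    exact hx (smul_eq_self_of_commutator_top (K := K) (G := G) (X := W) hGperf hcomm g x)
  -- pass to matrices
  set m := Module.finrank K W with hm
  have hm_pos : 0 < m := Module.finrank_pos
  set b := Module.finBasis K W with hb
  set τ : G → Matrix (Fin m) (Fin m) K := fun g => LinearMap.toMatrixAlgEquiv b (τop g) with hτ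
  have hτmul : ∀ g h : G, τ (g * h) = τ g * τ h := by
    intro g h
    rw [hτ]
    dsimp only
    rw [τop_mul, map_mul]
  have hτone : τ 1 = 1 := by
    have h1 : τop 1 = 1 := by
      ext x
      rw [τop_apply, map_one, one_smul, Module.End.one_apply]
    rw [hτ]
    dsimp only
    rw [h1, map_one]
  have hτscalar : ∀ (g : G) (c : K), τ g = c • 1 ↔
      ∀ x : W, MonoidAlgebra.of K G g • x = c • x := by
    intro g c
    constructor
    · intro h x
      have h2 : τop g = c • 1 := by
        apply (LinearMap.toMatrixAlgEquiv b).injective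
        rw [map_smul, map_one]
        exact h
      have h3 := congrArg (fun φ : W →ₗ[K] W => φ x) h2
      simpa [τop_apply] using h3
    · intro h
      have h2 : τop g = c • 1 := by
        ext x
        rw [LinearMap.smul_apply, Module.End.one_apply, τop_apply]
        exact h x
      rw [hτ]
      dsimp only
      rw [h2, map_smul, map_one]
  set i₀ : Fin m := ⟨0, hm_pos⟩ with hi₀
  have hnonscalar : ∀ g : G, g ∉ Subgroup.center G →
      ∃ ij : Fin m × Fin m, τ g ij.1 ij.2 ≠
        τ g i₀ i₀ * (1 : Matrix (Fin m) (Fin m) K) ij.1 ij.2 := by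
    intro g hg
    by_contra hcon
    push_neg at hcon
    apply hg
    apply hscalar_central g
    refine ⟨τ g i₀ i₀, ?_⟩
    rw [← hτscalar]
    ext i j
    rw [Matrix.smul_apply, smul_eq_mul]
    exact hcon (i, j)
  set wit : G → K := fun g =>
    if h : ∃ ij : Fin m × Fin m, τ g ij.1 ij.2 ≠
        τ g i₀ i₀ * (1 : Matrix (Fin m) (Fin m) K) ij.1 ij.2
    then τ g h.choose.1 h.choose.2 -
      τ g i₀ i₀ * (1 : Matrix (Fin m) (Fin m) K) h.choose.1 h.choose.2
    else 1 with hwit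
  have hwit_ne : ∀ g, wit g ≠ 0 := by
    intro g
    rw [hwit]
    dsimp only
    split_ifs with h
    · exact sub_ne_zero.mpr h.choose_spec
    · exact one_ne_zero
  set t : K := ∏ g : G, wit g with ht
  have htne : t ≠ 0 := Finset.prod_ne_zero_iff.mpr fun g _ => hwit_ne g
  letI : Algebra (ZMod p) K := ZMod.algebra K p
  set ents : Finset K :=
    (Finset.univ.image fun x : G × Fin m × Fin m => τ x.1 x.2.1 x.2.2) ∪ {t⁻¹} with hents
  set R₀ : Subalgebra (ZMod p) K := Algebra.adjoin (ZMod p) (ents : Set K) with hR₀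
  have hent : ∀ (g : G) (i j : Fin m), τ g i j ∈ R₀ := by
    intro g i j
    apply Algebra.subset_adjoin
    rw [hents]
    simp only [Finset.coe_union, Set.mem_union, Finset.coe_image, Set.mem_image]
    exact Or.inl ⟨(g, i, j), by simp⟩
  have htinv : (t⁻¹ : K) ∈ R₀ := by
    apply Algebra.subset_adjoin
    rw [hents]
    simp
  have hwitmem : ∀ g, wit g ∈ R₀ := by
    intro g
    rw [hwit]
    dsimp only
    split_ifs with h
    · refine sub_mem (hent _ _ _) (mul_mem (hent _ _ _) ?_)
      rw [Matrix.one_apply]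
      split_ifs
      · exact one_mem R₀
      · exact zero_mem R₀
    · exact one_mem R₀
  have hwitunit : ∀ g : G, IsUnit (⟨wit g, hwitmem g⟩ : R₀) := by
    intro g
    have hprodmem : (∏ h ∈ Finset.univ.erase g, wit h) ∈ R₀ :=
      Subalgebra.prod_mem R₀ fun h _ => hwitmem h
    refine IsUnit.of_mul_eq_one (⟨∏ h ∈ Finset.univ.erase g, wit h, hprodmem⟩ *
      ⟨t⁻¹, htinv⟩) ?_
    apply Subtype.ext
    show wit g * ((∏ h ∈ Finset.univ.erase g, wit h) * t⁻¹) = 1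
    rw [← mul_assoc, Finset.mul_prod_erase Finset.univ wit (Finset.mem_univ g), ← ht,
      mul_inv_cancel₀ htne]
  have hFT : Algebra.FiniteType (ZMod p) R₀ := by
    rw [hR₀, ← Subalgebra.fg_iff_finiteType]
    exact Subalgebra.fg_adjoin_finset ents
  obtain ⟨I, hI⟩ := Ideal.exists_maximal R₀
  letI : I.IsMaximal := hI
  letI : Field (R₀ ⧸ I) := Ideal.Quotient.field I
  have hFTq : Algebra.FiniteType (ZMod p) (R₀ ⧸ I) :=
    Algebra.FiniteType.of_surjective (Ideal.Quotient.mkₐ (ZMod p) I)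
      Ideal.Quotient.mk_surjective
  letI hfinq : Module.Finite (ZMod p) (R₀ ⧸ I) :=
    finite_of_finite_type_of_isJacobsonRing _ _
  letI : Algebra.IsAlgebraic (ZMod p) (R₀ ⧸ I) := Algebra.IsAlgebraic.of_finite _ _
  set F' := AlgebraicClosure (ZMod p) with hF'
  set ψ : R₀ →+* F' :=
    (IsAlgClosed.lift (R := ZMod p) (S := R₀ ⧸ I) (M := F')).toRingHom.comp
      (Ideal.Quotient.mk I) with hψ
  have hψwit : ∀ g : G, ψ (⟨wit g, hwitmem g⟩ : R₀) ≠ 0 :=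
    fun g => ((hwitunit g).map ψ).ne_zero
  -- matrices over R₀ and over F'
  set T : G → Matrix (Fin m) (Fin m) R₀ :=
    (fun g => Matrix.of fun i j => (⟨τ g i j, hent g i j⟩ : R₀)) with hT
  set V : Matrix (Fin m) (Fin m) R₀ →+* Matrix (Fin m) (Fin m) K :=
    (R₀.val.toRingHom).mapMatrix with hV
  have hTval : ∀ g, V (T g) = τ g := by
    intro g
    ext i j
    rfl
  have hVinj : Function.Injective V := by
    intro M N h
    ext i j
    have h2 : V M i j = V N i j := by rw [h]
    exact h2
  have hTmul : ∀ g h : G, T (g * h) = T g * T h := by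
    intro g h
    apply hVinj
    rw [map_mul, hTval, hTval, hTval, hτmul]
  have hTone : T 1 = 1 := by
    apply hVinj
    rw [map_one, hTval, hτone]
  set Ψ : Matrix (Fin m) (Fin m) R₀ →+* Matrix (Fin m) (Fin m) F' := ψ.mapMatrix with hΨ
  set χ' : G → Matrix (Fin m) (Fin m) F' := fun g => Ψ (T g) with hχ'
  have hχ'mul : ∀ g h : G, χ' (g * h) = χ' g * χ' h := by
    intro g h
    rw [hχ']
    dsimp only
    rw [hTmul, map_mul]
  have hχ'one : χ' 1 = 1 := by
    rw [hχ']
    dsimp only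
    rw [hTone, map_one]
  set χhom : G →* GL (Fin m) F' :=
    { toFun := fun g => ⟨χ' g, χ' g⁻¹,
        by rw [← hχ'mul, mul_inv_cancel, hχ'one],
        by rw [← hχ'mul, inv_mul_cancel, hχ'one]⟩
      map_one' := Units.ext hχ'one
      map_mul' := fun g h => Units.ext (hχ'mul g h) } with hχhom
  set Zc := Subgroup.center (GL (Fin m) F') with hZc
  set θ : G →* (GL (Fin m) F' ⧸ Zc) := (QuotientGroup.mk' Zc).comp χhom with hθ
  have hχ'val : ∀ g : G, (χhom g : Matrix (Fin m) (Fin m) F') = χ' g := fun g => rfl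
  have hker_ge : ∀ z ∈ Subgroup.center G, θ z = 1 := by
    intro z hz
    obtain ⟨c, hc⟩ := hcentral z hz
    have hτz : τ z = c • 1 := (hτscalar z c).mpr hc
    have hcR : c ∈ R₀ := by
      have h1 : τ z i₀ i₀ = c := by
        rw [hτz, Matrix.smul_apply, Matrix.one_apply_eq, smul_eq_mul, mul_one]
      rw [← h1]
      exact hent z i₀ i₀
    have hχ'z : χ' z = ψ ⟨c, hcR⟩ • 1 := by
      ext i j
      show ψ (T z i j) = _
      have h2 : T z i j = ⟨c, hcR⟩ * (if i = j then 1 else 0) := by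
        apply Subtype.ext
        show τ z i j = ((⟨c, hcR⟩ * if i = j then 1 else 0 : R₀) : K)
        rw [MulMemClass.coe_mul]
        have h3 : ((if i = j then 1 else 0 : R₀) : K) = if i = j then 1 else 0 := by
          split_ifs <;> rfl
        rw [h3, hτz, Matrix.smul_apply, smul_eq_mul, Matrix.one_apply]
      rw [h2, map_mul, Matrix.smul_apply, Matrix.one_apply, smul_eq_mul]
      congr 1
      split_ifs
      · exact map_one ψ
      · exact map_zero ψ
    rw [hθ]
    show (QuotientGroup.mk' Zc) (χhom z) = 1
    rw [QuotientGroup.mk'_apply, QuotientGroup.eq_one_iff]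
    rw [hZc, Subgroup.mem_center_iff]
    intro B
    apply Units.ext
    rw [Units.val_mul, Units.val_mul, hχ'val, hχ'z, Matrix.mul_smul, Matrix.smul_mul,
      mul_one, one_mul]
  have hker_le : ∀ g : G, θ g = 1 → g ∈ Subgroup.center G := by
    intro g hgθ
    have hgZc : χhom g ∈ Zc := by
      rw [hθ] at hgθ
      have h2 : (QuotientGroup.mk' Zc) (χhom g) = 1 := hgθ
      rw [QuotientGroup.mk'_apply, QuotientGroup.eq_one_iff] at h2
      exact h2
    have hcommt : ∀ tv : Matrix.TransvectionStruct (Fin m) F', Commute tv.toMatrix (χ' g) := by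
      intro tv
      set u : GL (Fin m) F' := ⟨tv.toMatrix, tv.inv.toMatrix, tv.mul_inv, tv.inv_mul⟩ with hu
      have h3 := Subgroup.mem_center_iff.mp hgZc u
      have h4 := congrArg Units.val h3
      rw [Units.val_mul, Units.val_mul, hχ'val] at h4
      exact h4
    obtain ⟨e, he⟩ := Matrix.mem_range_scalar_of_commute_transvectionStruct hcommt
    by_contra hgc
    have hd := hnonscalar g hgc
    have hwg : wit g = τ g hd.choose.1 hd.choose.2 -
        τ g i₀ i₀ * (1 : Matrix (Fin m) (Fin m) K) hd.choose.1 hd.choose.2 := by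
      rw [hwit]
      dsimp only
      rw [dif_pos hd]
    set i := hd.choose.1 with hi
    set j := hd.choose.2 with hj
    have hsplit : (⟨wit g, hwitmem g⟩ : R₀) = ⟨τ g i j, hent g i j⟩ -
        ⟨τ g i₀ i₀, hent g i₀ i₀⟩ * (if i = j then 1 else 0) := by
      apply Subtype.ext
      show wit g = ((⟨τ g i j, hent g i j⟩ - ⟨τ g i₀ i₀, hent g i₀ i₀⟩ *
        (if i = j then 1 else 0) : R₀) : K)
      rw [AddSubgroupClass.coe_sub, MulMemClass.coe_mul]
      have h3 : ((if i = j then 1 else 0 : R₀) : K) = if i = j then 1 else 0 := by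
        split_ifs <;> rfl
      rw [h3, hwg, Matrix.one_apply]
    have hψTapp : ∀ i' j' : Fin m, ψ (T g i' j') = χ' g i' j' := fun _ _ => rfl
    have hχval : ∀ i' j' : Fin m, χ' g i' j' = if i' = j' then e else 0 := by
      intro i' j'
      rw [← he, Matrix.scalar_apply, Matrix.diagonal_apply]
    have hcontr : ψ (⟨wit g, hwitmem g⟩ : R₀) = 0 := by
      rw [hsplit, map_sub, map_mul]
      have e1 : ψ ⟨τ g i j, hent g i j⟩ = χ' g i j := rfl
      have e2 : ψ ⟨τ g i₀ i₀, hent g i₀ i₀⟩ = χ' g i₀ i₀ := rfl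
      rw [e1, e2, hχval, hχval]
      have e3 : ψ (if i = j then 1 else 0) = if i = j then (1 : F') else 0 := by
        split_ifs
        · exact map_one ψ
        · exact map_zero ψ
      rw [e3]
      simp only [if_pos rfl]
      split_ifs <;> ring
    exact hψwit g hcontr
  -- descend to the quotient
  have hker_ge' : Subgroup.center G ≤ θ.ker := fun z hz => hker_ge z hz
  set f : (G ⧸ Subgroup.center G) →* (GL (Fin m) F' ⧸ Zc) :=
    QuotientGroup.lift (Subgroup.center G) θ hker_ge' with hf
  have hfinj : Function.Injective f := by
    intro x y hxy
    obtain ⟨a, rfl⟩ := QuotientGroup.mk'_surjective (Subgroup.center G) x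
    obtain ⟨c, rfl⟩ := QuotientGroup.mk'_surjective (Subgroup.center G) y
    have hfa : f (QuotientGroup.mk' (Subgroup.center G) a) = θ a := rfl
    have hfc : f (QuotientGroup.mk' (Subgroup.center G) c) = θ c := rfl
    have h5 : θ (a⁻¹ * c) = 1 := by
      rw [map_mul, map_inv]
      rw [hfa, hfc] at hxy
      rw [hxy, inv_mul_cancel]
    have h6 : a⁻¹ * c ∈ Subgroup.center G := hker_le _ h5
    show QuotientGroup.mk a = QuotientGroup.mk c
    rw [QuotientGroup.eq]
    exact h6
  exact ⟨hm_pos, f, hfinj⟩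

/-- If `G` is a finite quasisimple group with central quotient `S`, `F` is a field of
characteristic `p`, and `ρ : G → GL(V)` is a representation with nontrivial image of
degree `R_p(S)`, then `ρ` is absolutely irreducible: the base change of `V` to an
algebraic closure of `F` is a simple module over the group algebra of `G`. -/
theorem stmt_2 (p : ℕ) [Fact p.Prime] (G : Type*) [Group G] [Finite G]
    (hG : IsQuasisimple G)
    (F : Type*) [Field F] [CharP F p]
    (V : Type*) [AddCommGroup V] [Module F V] [FiniteDimensional F V]
    (hdim : Module.finrank F V = projDim p (G ⧸ Subgroup.center G))
    (ρ : Representation F G V)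
    (hnontriv : ∃ g : G, ρ g ≠ 1) :
    IsSimpleModule (MonoidAlgebra (AlgebraicClosure F) G)
      (ρ.myBaseChange (AlgebraicClosure F)).asModule := by
  classical
  set K := AlgebraicClosure F with hK
  set ρ' := ρ.myBaseChange K with hρ'
  letI : IsScalarTower K (MonoidAlgebra K G) ρ'.asModule :=
    ⟨fun c a x => by
      show (ρ'.asAlgebraHom (c • a)) x = c • (ρ'.asAlgebraHom a) x
      rw [map_smul]; rfl⟩
  haveI : FiniteDimensional K ρ'.asModule :=
    inferInstanceAs (FiniteDimensional K (K ⊗[F] V))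
  have hrk : Module.finrank K ρ'.asModule = Module.finrank F V :=
    Module.finrank_baseChange
  by_contra hns
  -- nontrivial action on the base change
  have hnt : ∃ (g : G) (x : ρ'.asModule), MonoidAlgebra.of K G g • x ≠ x := by
    obtain ⟨g, hg⟩ := hnontriv
    obtain ⟨v, hv⟩ : ∃ v : V, ρ g v ≠ v := by
      by_contra hc
      push_neg at hc
      exact hg (LinearMap.ext fun v => by rw [hc v, Module.End.one_apply])
    have hinj : Function.Injective (fun v : V => (1 : K) ⊗ₜ[F] v) := by
      have h1 : Function.Injective ((Algebra.linearMap F K).rTensor V) :=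
        Module.Flat.rTensor_preserves_injective_linearMap _ (algebraMap F K).injective
      intro v w hvw
      have h2 : ((Algebra.linearMap F K).rTensor V) ((TensorProduct.lid F V).symm v)
          = ((Algebra.linearMap F K).rTensor V) ((TensorProduct.lid F V).symm w) := by
        rw [TensorProduct.lid_symm_apply, TensorProduct.lid_symm_apply,
          LinearMap.rTensor_tmul, LinearMap.rTensor_tmul]
        simpa using hvw
      exact (TensorProduct.lid F V).symm.injective (h1 h2)
    refine ⟨g, ρ'.asModuleEquiv.symm ((1 : K) ⊗ₜ[F] v), ?_⟩
    intro heq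
    rw [← Representation.asModuleEquiv_symm_map_rho] at heq
    have h3 := ρ'.asModuleEquiv.symm.injective heq
    have h4 : ((ρ g).baseChange K) ((1 : K) ⊗ₜ[F] v) = (1 : K) ⊗ₜ[F] v := h3
    rw [LinearMap.baseChange_tmul] at h4
    exact hv (hinj h4)
  obtain ⟨S, hS1, hS2⟩ := findSimple K G hG.1 (Module.finrank K ρ'.asModule)
    ρ'.asModule le_rfl hnt
  have hlt := hS2 hns
  obtain ⟨hpos, f, hfinj⟩ := embed_PGL p hG S.W S.simple S.nontriv
  have hle : projDim p (G ⧸ Subgroup.center G) ≤ Module.finrank K S.W :=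
    Nat.sInf_le ⟨hpos, f, hfinj⟩
  rw [hrk, hdim] at hlt
  omega
end

section
/- Let S be a finite non-abelian simple group and let U be a proper subgroup of S. Then R(S) < [S : U], where [S : U] denotes the index of U in S. -/
open scoped MatrixGroups

section PermRep
variable (F : Type*) [Field F] (α : Type*)

noncomputable def permV : Equiv.Perm α →* ((α → F) ≃ₗ[F] (α → F)) where
  toFun σ := LinearEquiv.funCongrLeft F F σ.symm
  map_one' := by ext f a; simp [LinearEquiv.funCongrLeft]; rfl
  map_mul' σ τ := by
    ext f a
    simp [LinearEquiv.funCongrLeft, LinearEquiv.automorphismGroup]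
    rfl

noncomputable abbrev Wsub : Submodule F (α → F) := Submodule.span F {(1 : α → F)}

lemma permV_map_W (σ : Equiv.Perm α) :
    (Wsub F α).map ((permV F α σ : (α → F) →ₗ[F] (α → F))) = Wsub F α := by
  rw [Wsub, Submodule.map_span]
  congr 1
  ext x
  constructor
  · rintro ⟨y, hy, rfl⟩
    simp_all
    ext a; rfl
  · rintro rfl
    exact ⟨1, rfl, by ext a; rfl⟩

noncomputable def permQ :
    Equiv.Perm α →* (((α → F) ⧸ Wsub F α) ≃ₗ[F] ((α → F) ⧸ Wsub F α)) where
  toFun σ := Submodule.Quotient.equiv _ _ (permV F α σ) (permV_map_W F α σ)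
  map_one' := by
    refine LinearEquiv.toLinearMap_injective ?_
    ext x
    simp [Submodule.Quotient.equiv]
  map_mul' σ τ := by
    refine LinearEquiv.toLinearMap_injective ?_
    ext x
    simp [Submodule.Quotient.equiv, LinearEquiv.automorphismGroup]

lemma permQ_injective [Fintype α] (h3 : 3 ≤ Fintype.card α) :
    Function.Injective (permQ F α) := by
  classical
  rw [injective_iff_map_eq_one]
  intro σ hσ
  by_contra hne
  obtain ⟨a, ha⟩ : ∃ a, σ a ≠ a := by
    by_contra h
    push_neg at h
    exact hne (Equiv.ext h)
  have hx : Submodule.Quotient.mk (p := Wsub F α) (permV F α σ (Pi.single a 1))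
      = Submodule.Quotient.mk (Pi.single a 1) := by
    have := congrArg (fun e : ((α → F) ⧸ Wsub F α) ≃ₗ[F] ((α → F) ⧸ Wsub F α) =>
      e (Submodule.Quotient.mk (Pi.single a 1))) hσ
    simpa [permQ, Submodule.Quotient.equiv] using this
  rw [Submodule.Quotient.eq] at hx
  have hsingle : permV F α σ (Pi.single a 1) = Pi.single (σ a) (1 : F) := by
    have happ : ∀ (f : α → F) b, permV F α σ f b = f (σ.symm b) := fun f b => by
      simp [permV]
    ext b
    rw [happ]
    by_cases hb : b = σ a
    · subst hb; rw [Equiv.symm_apply_apply]; simp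
    · rw [Pi.single_apply, Pi.single_apply, if_neg hb, if_neg]
      intro h
      exact hb (by rw [← h]; simp)
  rw [hsingle, Submodule.mem_span_singleton] at hx
  obtain ⟨c, hc⟩ := hx
  obtain ⟨b, hba, hbs⟩ : ∃ b, b ≠ a ∧ b ≠ σ a := by
    by_contra h
    push_neg at h
    have hsub : (Finset.univ : Finset α) ⊆ {a, σ a} := by
      intro x _
      rcases Classical.em (x = a) with h1 | h1
      · simp [h1]
      · simp [h x h1]
    have := Finset.card_le_card hsub
    have h2 : ({a, σ a} : Finset α).card ≤ 2 := Finset.card_insert_le _ _ |>.trans (by simp)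
    simp [Finset.card_univ] at this
    omega
  have hcb := congrFun hc b
  have hcs := congrFun hc (σ a)
  simp [Pi.single_apply, hba.symm, hbs.symm, (Ne.symm ha)] at hcb hcs
  subst hcb
  simp at hcs

end PermRep

/-- `projDimMin H` is `R(H)`: the minimum of `R_p(H)` over all primes `p`. -/
noncomputable def projDimMin (H : Type*) [Group H] : ℕ :=
  sInf { m | ∃ (p : ℕ) (hp : p.Prime), m = @projDim p ⟨hp⟩ H _ }

/-- If `S` is a finite non-abelian simple group and `U` a proper subgroup of `S`,
then `R(S) < [S : U]`. -/
theorem stmt_3 (S : Type*) [Group S] [Finite S] [IsSimpleGroup S]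
    (hnonab : ∃ a b : S, a * b ≠ b * a)
    (U : Subgroup S) (hU : U ≠ ⊤) :
    projDimMin S < U.index := by
  classical
  obtain ⟨a0, b0, hab⟩ := hnonab
  have hindex1 : U.index ≠ 1 := fun h => hU (Subgroup.index_eq_one.mp h)
  have hindex0 : U.index ≠ 0 := Subgroup.index_ne_zero_of_finite
  have hindex2 : U.index ≠ 2 := by
    intro h2
    have hnorm : U.Normal := by
      constructor
      intro x hx g
      have h1 : g * x ∈ U ↔ (g ∈ U ↔ x ∈ U) := Subgroup.mul_mem_iff_of_index_two h2
      have h2' : g * x * g⁻¹ ∈ U ↔ (g * x ∈ U ↔ g⁻¹ ∈ U) :=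
        Subgroup.mul_mem_iff_of_index_two h2
      rw [h2', h1, U.inv_mem_iff]
      tauto
    rcases hnorm.eq_bot_or_eq_top with hbot | htop
    · have hcard : Nat.card S = 2 := by rw [← Subgroup.index_bot, ← hbot, h2]
      haveI : Fact (Nat.Prime 2) := ⟨Nat.prime_two⟩
      haveI : IsCyclic S := isCyclic_of_prime_card hcard
      letI := IsCyclic.commGroup (α := S)
      exact hab (mul_comm a0 b0)
    · exact hU htop
  have h3 : 3 ≤ U.index := by omega
  set α := S ⧸ U with hα
  haveI : Fintype α := Fintype.ofFinite α
  have hcard : Fintype.card α = U.index := by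
    rw [Subgroup.index, Nat.card_eq_fintype_card]
  set φ := MulAction.toPermHom S α with hφdef
  have hφ : Function.Injective φ := by
    rw [← MonoidHom.ker_eq_bot_iff, hφdef, ← Subgroup.normalCore_eq_ker]
    rcases (Subgroup.normalCore_normal U).eq_bot_or_eq_top with h | h
    · exact h
    · exact absurd (h ▸ U.normalCore_le) fun hle => hU (top_le_iff.mp hle)
  -- field and linear algebra setup
  set F := AlgebraicClosure (ZMod 2) with hF
  set m := U.index - 1 with hm
  set Q := (α → F) ⧸ Wsub F α with hQ
  have hdimV : Module.finrank F (α → F) = U.index := by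
    rw [Module.finrank_pi, hcard]
  have hone : (1 : α → F) ≠ 0 := by
    intro h
    have : Nonempty α := by
      rw [← Fintype.card_pos_iff]; omega
    obtain ⟨a⟩ := this
    have := congrFun h a
    simp at this
  have hdimW : Module.finrank F (Wsub F α) = 1 := finrank_span_singleton hone
  have hdim : Module.finrank F Q = m := by
    have h := Submodule.finrank_quotient_add_finrank (Wsub F α)
    rw [hdimW, hdimV] at h
    show Module.finrank F ((α → F) ⧸ Wsub F α) = m
    omega
  let b : Module.Basis (Fin m) F Q := (Module.finBasis F Q).reindex (finCongr hdim)
  let e1 : (Q ≃ₗ[F] Q) ≃* LinearMap.GeneralLinearGroup F Q :=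
    (LinearMap.GeneralLinearGroup.generalLinearEquiv F Q).symm
  let e2 : LinearMap.GeneralLinearGroup F Q ≃* GL (Fin m) F :=
    Units.mapEquiv (LinearMap.toMatrixAlgEquiv b).toMulEquiv
  let g : S →* GL (Fin m) F :=
    (e2.toMonoidHom.comp e1.toMonoidHom).comp ((permQ F α).comp φ)
  have hg : Function.Injective g := by
    refine e2.injective.comp (e1.injective.comp ?_)
    exact (permQ_injective F α (by omega)).comp hφ
  let χ : S →* PGL m F := (QuotientGroup.mk' (Subgroup.center (GL (Fin m) F))).comp g
  have hχ : Function.Injective χ := by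
    rw [← MonoidHom.ker_eq_bot_iff]
    rcases (MonoidHom.normal_ker χ).eq_bot_or_eq_top with h | h
    · exact h
    · exfalso
      have hcen : ∀ s : S, g s ∈ Subgroup.center (GL (Fin m) F) := by
        intro s
        have hs : s ∈ MonoidHom.ker χ := h ▸ Subgroup.mem_top s
        rw [MonoidHom.mem_ker] at hs
        exact (QuotientGroup.eq_one_iff _).mp hs
      apply hab
      apply hg
      rw [map_mul, map_mul]
      exact (Subgroup.mem_center_iff.mp (hcen b0) (g a0))
  -- conclude
  have hmem : m ∈ { n | 0 < n ∧
      ∃ f : S →* PGL n (AlgebraicClosure (ZMod 2)), Function.Injective f } :=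
    ⟨by omega, χ, hχ⟩
  haveI : Fact (Nat.Prime 2) := ⟨Nat.prime_two⟩
  have h1 : projDim 2 S ≤ m := Nat.sInf_le hmem
  have h2 : projDimMin S ≤ projDim 2 S :=
    Nat.sInf_le ⟨2, Nat.prime_two, rfl⟩
  omega
end
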